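/- Let f ∈ ℤ[x] be monic, quadratic, and irreducible over ℚ; let γ ∈ ℚ be its critical point and set m = f(γ) − γ, so that f = (x − γ)² + γ + m. Assume either |m| > 6 + 3·√(|γ| + 1), or γ ∈ ℤ and |m| > 1 + √(|γ| + 1). Assume furthermore that for every rational number s with s² = f²(γ), neither (−m + s)/2 nor (−m − s)/2 is the square of a nonzero rational number. Then f is stable, i.e. f^n is irreducible over ℚ for every n ≥ 1. -/

import Mathlib

set_option maxHeartbeats 1000000

open Polynomial

/-- The `n`-th iterate of a polynomial, with `f^0 = X`. -/
noncomputable def polyIter {R : Type*} [CommRing R] (f : Polynomial R) : ℕ → Polynomial R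
  | 0 => X
  | n + 1 => f.comp (polyIter f n)

lemma eval_quad (p : Polynomial ℚ) (hm : p.Monic) (h2 : p.natDegree = 2) (x : ℚ) :
    p.eval x = x^2 + p.coeff 1 * x + p.coeff 0 := by
  have hlc : p.coeff 2 = 1 := by
    have := hm.coeff_natDegree
    rwa [h2] at this
  rw [eval_eq_sum_range, h2]
  simp [Finset.sum_range_succ, hlc]
  ring

lemma rat_int_of_sq (x : ℚ) (n : ℤ) (h : x^2 = (n:ℚ)) : ∃ T : ℤ, (T:ℚ) = x := by
  have hden : (x * x).den = x.den * x.den := Rat.mul_self_den x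
  have h1 : (x*x).den = 1 := by rw [← sq, h, Rat.den_intCast]
  have h2 : x.den * x.den = 1 := hden ▸ h1
  have : x.den = 1 := by nlinarith [x.pos]
  exact ⟨x.num, Rat.coe_int_num_of_den_eq_one this⟩

lemma int_abs_le_of_sq (T U c : ℤ) (hc : c ≠ 0) (h : T^2 = U^2 + c) : |U| ≤ |c| := by
  have h1 : (T - U) * (T + U) = c := by ring_nf; linarith
  have h2 : T - U ≠ 0 := fun h0 => hc (by rw [h0, zero_mul] at h1; exact h1.symm)
  have h3 : T + U ≠ 0 := fun h0 => hc (by rw [h0, mul_zero] at h1; exact h1.symm)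
  have e2 : (1:ℤ) ≤ |T - U| := Int.one_le_abs h2
  have e3 : (1:ℤ) ≤ |T + U| := Int.one_le_abs h3
  have e4 : |c| = |T - U| * |T + U| := by rw [← abs_mul, h1]
  have e5 : 2 * |U| ≤ |T - U| + |T + U| := by
    have := abs_sub (T + U) (T - U)
    have h6 : |(T+U) - (T-U)| = 2 * |U| := by rw [show (T+U)-(T-U) = 2*U by ring, abs_mul]; simp
    calc 2 * |U| = |(T+U) - (T-U)| := h6.symm
      _ ≤ |T + U| + |T - U| := abs_sub _ _
      _ = |T - U| + |T + U| := by ring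
  nlinarith [abs_nonneg U, abs_nonneg (T-U), abs_nonneg (T+U)]

lemma int_dyadic (T V c : ℤ) (hT : Odd T) (hV : Odd V) (hc : c ≠ 0) (h : T^2 = V^2 + c) :
    2 * |V| ≤ |c| := by
  have h1 : (T - V) * (T + V) = c := by ring_nf; linarith
  have h2 : T - V ≠ 0 := fun h0 => hc (by rw [h0, zero_mul] at h1; exact h1.symm)
  have h3 : T + V ≠ 0 := fun h0 => hc (by rw [h0, mul_zero] at h1; exact h1.symm)
  have hev1 : (2:ℤ) ∣ (T - V) := (Int.even_sub.mpr (by simp [Int.not_even_iff_odd.mpr hT, Int.not_even_iff_odd.mpr hV])).two_dvd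
  have hev2 : (2:ℤ) ∣ (T + V) := (Int.even_add.mpr (by simp [Int.not_even_iff_odd.mpr hT, Int.not_even_iff_odd.mpr hV])).two_dvd
  have e2 : (2:ℤ) ≤ |T - V| := by
    rcases hev1 with ⟨k, hk⟩
    have hk0 : k ≠ 0 := by rintro rfl; simp at hk; exact h2 hk
    rw [hk, abs_mul]; simpa using Int.one_le_abs hk0
  have e3 : (2:ℤ) ≤ |T + V| := by
    rcases hev2 with ⟨k, hk⟩
    have hk0 : k ≠ 0 := by rintro rfl; simp at hk; exact h3 hk
    rw [hk, abs_mul]; simpa using Int.one_le_abs hk0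
  have e4 : |c| = |T - V| * |T + V| := by rw [← abs_mul, h1]
  have e5 : 2 * |V| ≤ |T - V| + |T + V| := by
    calc 2 * |V| = |(T+V) - (T-V)| := by rw [show (T+V)-(T-V) = 2*V by ring, abs_mul]; simp
      _ ≤ |T + V| + |T - V| := abs_sub _ _
      _ = |T - V| + |T + V| := by ring
  nlinarith [abs_nonneg V]

-- symmetric polynomial is a polynomial in q = (X - C γ)^2 + C c
lemma sym_comp_aux (γ c : ℚ) : ∀ d : ℕ, ∀ p : Polynomial ℚ, p.natDegree ≤ d →
    p.comp (C (2*γ) - X) = p →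
    ∃ G : Polynomial ℚ, p = G.comp ((X - C γ)^2 + C c) ∧ 2 * G.natDegree = p.natDegree := by
  intro d
  induction d with
  | zero =>
    intro p hd _
    refine ⟨C (p.coeff 0), ?_, by simp [Nat.le_zero.mp hd]⟩
    rw [C_comp]
    exact eq_C_of_natDegree_eq_zero (Nat.le_zero.mp hd)
  | succ d ih =>
    intro p hd hsym
    by_cases hle : p.natDegree ≤ d
    · exact ih p hle hsym
    have hdeg : p.natDegree = d + 1 := by omega
    have hp0 : p ≠ 0 := fun h => by simp [h] at hdeg
    have hL : (C (2*γ) - X : Polynomial ℚ).natDegree = 1 := by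
      rw [show (C (2*γ) - X : Polynomial ℚ) = -(X - C (2*γ)) by ring, natDegree_neg, natDegree_X_sub_C]
    have hLlc : (C (2*γ) - X : Polynomial ℚ).leadingCoeff = -1 := by
      rw [show (C (2*γ) - X : Polynomial ℚ) = -(X - C (2*γ)) by ring, leadingCoeff_neg, (monic_X_sub_C _).leadingCoeff]
    have hlc : p.leadingCoeff = p.leadingCoeff * (-1)^(p.natDegree) := by
      conv_lhs => rw [← hsym]
      rw [leadingCoeff_comp (by rw [hL]; exact one_ne_zero), hLlc]
    have heven : Even p.natDegree := by
      rcases Nat.even_or_odd p.natDegree with h | h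
      · exact h
      · exfalso
        rw [h.neg_one_pow] at hlc
        have : p.leadingCoeff = 0 := by linarith [hlc]
        exact hp0 (leadingCoeff_eq_zero.mp this)
    obtain ⟨e, he⟩ := heven
    have he' : p.natDegree = 2 * e := by omega
    -- the leading "model" term
    set q : Polynomial ℚ := (X - C γ)^2 + C c with hq
    have hmodel : (C p.leadingCoeff * (X - C c)^e).comp q = C p.leadingCoeff * (X - C γ)^(2*e) := by
      rw [mul_comp, C_comp, pow_comp, sub_comp, X_comp, C_comp]
      congr 1
      rw [show q - C c = (X - C γ)^2 by rw [hq]; ring, ← pow_mul]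
    have hterm_sym : ((X - C γ)^(2*e) : Polynomial ℚ).comp (C (2*γ) - X) = (X - C γ)^(2*e) := by
      rw [pow_comp, sub_comp, X_comp, C_comp]
      rw [show (C (2*γ) : Polynomial ℚ) - X - C γ = -(X - C γ) by rw [show (C (2*γ) : Polynomial ℚ) = C γ + C γ by rw [two_mul, C_add]]; ring]
      rw [neg_pow, Even.neg_one_pow ⟨e, by ring⟩, one_mul]
    set p' : Polynomial ℚ := p - C p.leadingCoeff * (X - C γ)^(2*e) with hp'
    by_cases hp'0 : p' = 0
    · refine ⟨C p.leadingCoeff * (X - C c)^e, ?_, ?_⟩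
      · rw [hmodel]; rw [sub_eq_zero] at hp'0; exact hp'0
      · have hlcne : p.leadingCoeff ≠ 0 := leadingCoeff_ne_zero.mpr hp0
        rw [natDegree_C_mul hlcne, natDegree_pow, natDegree_X_sub_C, mul_one, he']
    · have hdlt : p'.natDegree < p.natDegree := by
        apply natDegree_lt_natDegree hp'0
        apply degree_sub_lt
        · rw [degree_C_mul (leadingCoeff_ne_zero.mpr hp0), degree_pow, degree_X_sub_C]
          rw [degree_eq_natDegree hp0, he']
          simp
        · exact hp0
        · rw [leadingCoeff_mul, leadingCoeff_C, Monic.leadingCoeff ((monic_X_sub_C γ).pow (2*e)), mul_one]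
      have hp'sym : p'.comp (C (2*γ) - X) = p' := by
        rw [hp', sub_comp, mul_comp, C_comp, hterm_sym, hsym]
      obtain ⟨G', hG'1, hG'2⟩ := ih p' (by omega) hp'sym
      refine ⟨G' + C p.leadingCoeff * (X - C c)^e, ?_, ?_⟩
      · rw [add_comp, ← hG'1, hmodel]
        rw [hp']; ring
      · have hlcne : p.leadingCoeff ≠ 0 := leadingCoeff_ne_zero.mpr hp0
        have hdG' : G'.natDegree < e := by omega
        have hdC : (C p.leadingCoeff * (X - C c)^e).natDegree = e := by
          rw [natDegree_C_mul hlcne, natDegree_pow, natDegree_X_sub_C, mul_one]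
        rw [natDegree_add_eq_right_of_natDegree_lt (by omega), hdC, he']

lemma dvd_of_comp_dvd (q G g : Polynomial ℚ) (hq2 : q.natDegree = 2)
    (hGm : G.Monic) (hG0 : G.natDegree ≠ 0) (h : G.comp q ∣ g.comp q) : G ∣ g := by
  have hq0 : q.natDegree ≠ 0 := by omega
  set r := g %ₘ G with hr
  have hdiv : g %ₘ G + G * (g /ₘ G) = g := modByMonic_add_div g G
  by_cases hr0 : r = 0
  · refine ⟨g /ₘ G, ?_⟩
    have hg : g = r + G * (g /ₘ G) := by rw [hr]; exact hdiv.symm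
    calc g = r + G * (g /ₘ G) := hg
      _ = G * (g /ₘ G) := by rw [hr0, zero_add]
  exfalso
  have hcomp : g.comp q = r.comp q + (G.comp q) * ((g /ₘ G).comp q) := by
    rw [← mul_comp, ← add_comp, hdiv]
  have hdvdr : G.comp q ∣ r.comp q := by
    have : r.comp q = g.comp q - (G.comp q) * ((g /ₘ G).comp q) := by rw [hcomp]; ring
    rw [this]
    exact dvd_sub h (Dvd.intro _ rfl)
  have hrc0 : r.comp q ≠ 0 := fun h0 => by
    have := leadingCoeff_comp (p := r) (q := q) hq0
    rw [h0, leadingCoeff_zero] at this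
    have : r.leadingCoeff = 0 := by
      have hqlc : q.leadingCoeff ≠ 0 := leadingCoeff_ne_zero.mpr (fun hq' => by simp [hq'] at hq2)
      have := this.symm
      exact (mul_eq_zero.mp this).resolve_right (pow_ne_zero _ hqlc)
    exact hr0 (leadingCoeff_eq_zero.mp this)
  have h1 : (G.comp q).natDegree ≤ (r.comp q).natDegree := natDegree_le_of_dvd hdvdr hrc0
  rw [natDegree_comp, natDegree_comp, hq2] at h1
  have h2 : r.natDegree < G.natDegree := by
    apply natDegree_lt_natDegree hr0
    exact degree_modByMonic_lt g hGm
  omega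

lemma comp_L_irreducible (γ : ℚ) (A : Polynomial ℚ) (hA : Irreducible A) :
    Irreducible (A.comp (C (2*γ) - X)) := by
  set L : Polynomial ℚ := C (2*γ) - X with hL
  have hLL : L.comp L = X := by
    rw [hL, sub_comp, C_comp, X_comp]; ring
  have hAA : (A.comp L).comp L = A := by rw [comp_assoc, hLL, comp_X]
  have hunit : ∀ w : Polynomial ℚ, IsUnit w → IsUnit (w.comp L) := by
    intro w hw
    obtain ⟨k, hk, hkw⟩ := Polynomial.isUnit_iff.mp hw
    rw [← hkw, C_comp]
    exact Polynomial.isUnit_C.mpr hk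
  constructor
  · intro hu
    exact hA.not_isUnit (hAA ▸ hunit _ hu)
  · intro u v huv
    have : A = (u.comp L) * (v.comp L) := by rw [← mul_comp, ← huv, hAA]
    rcases hA.isUnit_or_isUnit this with h | h
    · left; have := hunit _ h; rwa [comp_assoc, hLL, comp_X] at this
    · right; have := hunit _ h; rwa [comp_assoc, hLL, comp_X] at this

lemma stoll_structure (γ c : ℚ) (g : Polynomial ℚ) (hg : g.Monic) (hgi : Irreducible g)
    (hge : Even g.natDegree) (hg0 : g.natDegree ≠ 0)
    (hH : ¬ Irreducible (g.comp ((X - C γ)^2 + C c))) :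
    eval γ (g.comp ((X - C γ)^2 + C c)) = 0 ∨
    ∃ A : Polynomial ℚ, A.Monic ∧ Irreducible A ∧ A.natDegree = g.natDegree ∧
      g.comp ((X - C γ)^2 + C c) = A * (A.comp (C (2*γ) - X)) ∧
      A ≠ A.comp (C (2*γ) - X) := by
  classical
  set L : Polynomial ℚ := C (2*γ) - X with hLdef
  set q : Polynomial ℚ := (X - C γ)^2 + C c with hqdef
  have hC2 : (C (2*γ) : Polynomial ℚ) = C γ + C γ := by rw [two_mul, C_add]
  have hLL : L.comp L = X := by rw [hLdef, sub_comp, C_comp, X_comp]; ring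
  have hLdeg : L.natDegree = 1 := by
    rw [hLdef, show (C (2*γ) - X : Polynomial ℚ) = -(X - C (2*γ)) by ring, natDegree_neg,
      natDegree_X_sub_C]
  have hLdeg0 : L.natDegree ≠ 0 := by omega
  have hdeg2 : ((X - C γ)^2 : Polynomial ℚ).degree = 2 := by
    rw [degree_pow, degree_X_sub_C]; rfl
  have hdegC : (C c : Polynomial ℚ).degree < ((X - C γ)^2 : Polynomial ℚ).degree := by
    rw [hdeg2]
    exact lt_of_le_of_lt degree_C_le (by decide)
  have hqmonic : q.Monic := by
    rw [hqdef]
    exact ((monic_X_sub_C γ).pow 2).add_of_left hdegC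
  have hq2 : q.natDegree = 2 := by
    have : q.degree = 2 := by rw [hqdef, degree_add_eq_left_of_degree_lt hdegC, hdeg2]
    exact natDegree_eq_of_degree_eq_some this
  have hqL : q.comp L = q := by
    simp only [hqdef, hLdef, add_comp, pow_comp, sub_comp, X_comp, C_comp, hC2]
    ring
  set H : Polynomial ℚ := g.comp q with hHdef
  have hq0 : q.natDegree ≠ 0 := by omega
  have hHmonic : H.Monic := hg.comp hqmonic hq0
  have hHdeg : H.natDegree = g.natDegree * 2 := by rw [hHdef, natDegree_comp, hq2]
  have hH0 : H ≠ 0 := hHmonic.ne_zero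
  have hHnotunit : ¬ IsUnit H := fun hu => by
    have := natDegree_eq_zero_of_isUnit hu
    omega
  have hHsym : H.comp L = H := by rw [hHdef, comp_assoc, hqL]
  obtain ⟨A₀, hA₀irr, hA₀dvd⟩ := WfDvdMonoid.exists_irreducible_factor hHnotunit hH0
  have hA₀0 : A₀ ≠ 0 := hA₀irr.ne_zero
  set A : Polynomial ℚ := normalize A₀ with hAdef
  have hAm : A.Monic := monic_normalize hA₀0
  have hAassoc : Associated A A₀ := normalize_associated A₀
  have hAirr : Irreducible A := hAassoc.symm.irreducible hA₀irr
  have hAdvd : A ∣ H := hAassoc.dvd.trans hA₀dvd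
  have hA0 : A ≠ 0 := hAm.ne_zero
  have hAdeg0 : A.natDegree ≠ 0 := fun h0 =>
    hAirr.not_isUnit (by rw [hAm.natDegree_eq_zero.mp h0]; exact isUnit_one)
  have hσAdvd : A.comp L ∣ H := by
    obtain ⟨B, hB⟩ := hAdvd
    exact ⟨B.comp L, by rw [← mul_comp, ← hB, hHsym]⟩
  have hσAdeg : (A.comp L).natDegree = A.natDegree := by rw [natDegree_comp, hLdeg, mul_one]
  have hσσA : (A.comp L).comp L = A := by rw [comp_assoc, hLL, comp_X]
  have hσAlc : (A.comp L).leadingCoeff = (-1)^A.natDegree := by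
    rw [leadingCoeff_comp hLdeg0, hAm.leadingCoeff, one_mul]
    congr 1
    rw [hLdef, show (C (2*γ) - X : Polynomial ℚ) = -(X - C (2*γ)) by ring, leadingCoeff_neg,
      (monic_X_sub_C _).leadingCoeff]
  have hσA0 : A.comp L ≠ 0 := fun h0 => by
    rw [h0, leadingCoeff_zero] at hσAlc
    exact (pow_ne_zero A.natDegree (by norm_num : (-1:ℚ) ≠ 0)) hσAlc.symm
  -- helper to promote a symmetric monic divisor equal to a comp into H-equality
  have main : ∀ p : Polynomial ℚ, p.Monic → p.comp L = p → p ∣ H → p.natDegree ≠ 0 → p = H := by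
    intro p hpm hpsym hpdvd hpdeg0
    obtain ⟨G, hG1, hG2⟩ := sym_comp_aux γ c p.natDegree p le_rfl hpsym
    have hGm : G.Monic := by
      have := leadingCoeff_comp (p := G) (q := q) hq0
      rw [← hG1, hpm.leadingCoeff, hqmonic.leadingCoeff, one_pow, mul_one] at this
      exact this.symm
    have hG0' : G.natDegree ≠ 0 := by omega
    have hGg : G ∣ g := dvd_of_comp_dvd q G g hq2 hGm hG0' (by rw [← hG1]; exact hpdvd)
    have hGeq : G = g := by
      obtain ⟨t, ht⟩ := hGg
      rcases hgi.isUnit_or_isUnit ht with h | h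
      · exact absurd (natDegree_eq_zero_of_isUnit h) hG0'
      · exact eq_of_monic_of_associated hGm hg ⟨h.unit, by rw [IsUnit.unit_spec]; exact ht.symm⟩
    rw [hGeq] at hG1
    rw [hHdef, hqdef]
    exact hG1
  by_cases hsymA : A.comp L = A
  · exact absurd ((main A hAm hsymA hAdvd hAdeg0) ▸ hAirr) hH
  by_cases hasymA : A.comp L = -A
  · left
    have hevalA : eval γ A = 0 := by
      have hLγ : eval γ L = γ := by rw [hLdef]; simp; ring
      have h1 : eval γ (A.comp L) = eval γ A := by rw [eval_comp, hLγ]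
      rw [hasymA, eval_neg] at h1
      linarith
    obtain ⟨B, hB⟩ := hAdvd
    rw [hB, eval_mul, hevalA, zero_mul]
  · -- pairing case
    set k : ℚ := (-1)^A.natDegree with hk
    have hsgn : k * k = 1 := by
      rcases Nat.even_or_odd A.natDegree with h | h
      · rw [hk, h.neg_one_pow]; norm_num
      · rw [hk, h.neg_one_pow]; norm_num
    have hCk : (C k : Polynomial ℚ) * C k = 1 := by rw [← C_mul, hsgn, C_1]
    set Ab : Polynomial ℚ := C k * (A.comp L) with hAbdef
    have hAbm : Ab.Monic := by
      rw [Monic, hAbdef, leadingCoeff_mul, leadingCoeff_C, hσAlc, hsgn]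
    have hku : IsUnit (C k : Polynomial ℚ) := isUnit_C.mpr (by
      rcases Nat.even_or_odd A.natDegree with h | h
      · rw [hk, h.neg_one_pow]; exact isUnit_one
      · rw [hk, h.neg_one_pow]; exact isUnit_one.neg)
    have hAbirr : Irreducible Ab := by
      refine Associated.irreducible ⟨hku.unit, ?_⟩ (comp_L_irreducible γ A hAirr)
      rw [IsUnit.unit_spec, hAbdef]; ring
    have hAbdvd : Ab ∣ H := by
      obtain ⟨B, hB⟩ := hσAdvd
      refine ⟨C k * B, ?_⟩
      have : Ab * (C k * B) = (C k * C k) * (A.comp L * B) := by rw [hAbdef]; ring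
      rw [this, hCk, one_mul, hB]
    have hAbA : Ab ≠ A := by
      intro hEq
      rcases Nat.even_or_odd A.natDegree with h | h
      · apply hsymA
        have : (C k : Polynomial ℚ) = 1 := by rw [hk, h.neg_one_pow, C_1]
        rw [hAbdef, this, one_mul] at hEq
        exact hEq
      · apply hasymA
        have : (C k : Polynomial ℚ) = -1 := by rw [hk, h.neg_one_pow]; simp
        rw [hAbdef, this] at hEq
        linear_combination -hEq
    have hnotdvd : ¬ A ∣ Ab := by
      intro hdvd
      obtain ⟨t, ht⟩ := hdvd
      rcases hAbirr.isUnit_or_isUnit ht with h | h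
      · exact hAirr.not_isUnit h
      · have hassoc : Associated A Ab := ⟨h.unit, by rw [IsUnit.unit_spec]; exact ht.symm⟩
        exact hAbA (eq_of_monic_of_associated hAm hAbm hassoc).symm
    have hcop : IsCoprime A Ab := (hAirr.coprime_iff_not_dvd).mpr hnotdvd
    have hproddvd : A * Ab ∣ H := hcop.mul_dvd hAdvd hAbdvd
    have hprodsym : (A * Ab).comp L = A * Ab := by
      rw [mul_comp, hAbdef, mul_comp, C_comp, hσσA]
      have : A.comp L * (C k * A) = (A * (C k * A.comp L)) := by ring
      rw [this]
    have hprodm : (A * Ab).Monic := hAm.mul hAbm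
    have hproddeg : (A * Ab).natDegree = 2 * A.natDegree := by
      have hCk0 : (C k : Polynomial ℚ) ≠ 0 := fun h => by
        rw [C_eq_zero] at h
        rw [h, mul_zero] at hsgn
        norm_num at hsgn
      rw [natDegree_mul hA0 hAbm.ne_zero, hAbdef, natDegree_mul hCk0 hσA0, natDegree_C, hσAdeg]
      omega
    have hprodd0 : (A * Ab).natDegree ≠ 0 := by omega
    have hfinal : A * Ab = H := main (A * Ab) hprodm hprodsym hproddvd hprodd0
    right
    have hdA : A.natDegree = g.natDegree := by
      have := hfinal ▸ hproddeg
      omega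
    have hkone : (C k : Polynomial ℚ) = 1 := by
      rw [hk, hdA, hge.neg_one_pow, C_1]
    refine ⟨A, hAm, hAirr, hdA, ?_, ?_⟩
    · rw [← hfinal, hAbdef, hkone, one_mul]
    · have hAbσ : Ab = A.comp L := by rw [hAbdef, hkone, one_mul]
      exact fun hEq => hAbA (hAbσ.trans hEq.symm)

lemma polyIter_map (f : Polynomial ℤ) (n : ℕ) :
    (polyIter f n).map (Int.castRingHom ℚ) = polyIter (f.map (Int.castRingHom ℚ)) n := by
  induction n with
  | zero => simp [polyIter]
  | succ n ih => simp [polyIter, map_comp, ih]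

lemma polyIter_succ_right {R : Type*} [CommRing R] (f : Polynomial R) (n : ℕ) :
    polyIter f (n+1) = (polyIter f n).comp f := by
  induction n with
  | zero => simp [polyIter]
  | succ n ih =>
    show f.comp (polyIter f (n+1)) = _
    rw [ih, ← comp_assoc, ← ih]
    rfl

lemma polyIter_monic (q : Polynomial ℚ) (hm : q.Monic) (h2 : q.natDegree = 2) (n : ℕ) :
    (polyIter q n).Monic ∧ (polyIter q n).natDegree = 2^n := by
  induction n with
  | zero => exact ⟨monic_X, by simp [polyIter]⟩
  | succ n ih =>
    refine ⟨hm.comp ih.1 (by rw [ih.2]; positivity), ?_⟩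
    show (q.comp (polyIter q n)).natDegree = 2^(n+1)
    rw [natDegree_comp, h2, ih.2]
    ring

lemma polyIter_eval (q : Polynomial ℚ) (x : ℚ) (n : ℕ) :
    eval x (polyIter q n) = (fun y => eval y q)^[n] x := by
  induction n with
  | zero => simp [polyIter]
  | succ n ih =>
    rw [Function.iterate_succ_apply', ← ih]
    show eval x (q.comp (polyIter q n)) = _
    rw [eval_comp]

noncomputable def itf {α : Type*} [CommRing α] (c : α) : ℕ → α := fun i => (fun y => y^2 + c)^[i] c

lemma itf_zero {α : Type*} [CommRing α] (c : α) : itf c 0 = c := rfl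

lemma itf_succ {α : Type*} [CommRing α] (c : α) (i : ℕ) : itf c (i+1) = (itf c i)^2 + c := by
  simp [itf, Function.iterate_succ_apply']

lemma itf_cast (c : ℤ) (i : ℕ) : ((itf c i : ℤ) : ℚ) = itf (c:ℚ) i := by
  induction i with
  | zero => rw [itf_zero, itf_zero]
  | succ i ih => rw [itf_succ, itf_succ]; push_cast; rw [ih]

lemma orbit_shift (γ m : ℚ) : ∀ j : ℕ,
    (fun x : ℚ => (x - γ)^2 + (γ + m))^[j+1] γ = itf m j + γ := by
  intro j
  induction j with
  | zero => rw [itf_zero]; simp; ring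
  | succ j ih =>
    rw [itf_succ, show j + 1 + 1 = (j+1) + 1 by ring, Function.iterate_succ_apply'
      (f := fun x : ℚ => (x - γ)^2 + (γ + m)), ih]
    ring

def Vseq (M : ℤ) : ℕ → ℤ
  | 0 => M
  | j+1 => (Vseq M j)^2 + M * 2^(2^(j+2) - 2)

lemma pow_sq (j : ℕ) : (2:ℚ)^(2^(j+2)) = ((2:ℚ)^(2^(j+1)))^2 := by
  rw [← pow_mul, pow_succ]

lemma four_le_pow (j : ℕ) : (4:ℕ) ≤ 2^(j+2) := by
  calc (4:ℕ) = 2^2 := by norm_num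
  _ ≤ 2^(j+2) := Nat.pow_le_pow_right (by norm_num) (by omega)

lemma exp_split (j : ℕ) : 2^(j+2) - 2 + 2 = 2^(j+2) := by
  have := four_le_pow j
  omega


lemma orbit_not_square (γ m : ℚ) (a c0 : ℤ) (ha : (a:ℚ) = 2*γ)
    (hma : m = (c0:ℚ) - γ^2 - γ) (hc0 : γ + m ≠ 0)
    (hbound : ((|m| : ℚ) : ℝ) > 6 + 3 * Real.sqrt (|γ| + 1) ∨
      ((∃ z : ℤ, (z : ℚ) = γ) ∧ ((|m| : ℚ) : ℝ) > 1 + Real.sqrt (|γ| + 1)))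
    (k : ℕ) (hk : 3 ≤ k) (t : ℚ) :
    t^2 ≠ (fun x : ℚ => (x - γ)^2 + (γ + m))^[k] γ := by
  intro hsq
  push_cast at hbound
  obtain ⟨i0, hjk⟩ : ∃ i0 : ℕ, k = (i0 + 1) + 2 := ⟨k - 3, by omega⟩
  have hval : (fun x : ℚ => (x - γ)^2 + (γ + m))^[k] γ
      = (itf m (i0+1))^2 + (γ + m) := by
    rw [hjk, show i0 + 1 + 2 = (i0+1+1) + 1 by omega, orbit_shift, itf_succ]
    ring
  rw [hval] at hsq
  -- real facts
  have hs1 : (1:ℝ) ≤ Real.sqrt (|((γ:ℚ):ℝ)| + 1) := by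
    rw [Real.one_le_sqrt]
    linarith [abs_nonneg ((γ:ℚ):ℝ)]
  have hs2 : (Real.sqrt (|((γ:ℚ):ℝ)| + 1))^2 = |((γ:ℚ):ℝ)| + 1 :=
    Real.sq_sqrt (by positivity)
  by_cases hint : ∃ z : ℤ, (z:ℚ) = γ
  · -- integer case
    obtain ⟨z, hz⟩ := hint
    have hb' : |((m:ℚ):ℝ)| > 1 + Real.sqrt (|((γ:ℚ):ℝ)| + 1) := by
      rcases hbound with h | h
      · linarith
      · exact h.2
    set Zm : ℤ := c0 - z*z - z with hZm
    have hmz : (Zm:ℚ) = m := by rw [hZm]; push_cast; rw [hma, ← hz]; ring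
    have hRabs : ((|Zm|:ℤ):ℝ) > 1 + Real.sqrt (|((γ:ℚ):ℝ)| + 1) := by
      have h9 : ((|Zm|:ℤ):ℝ) = |((m:ℚ):ℝ)| := by
        rw [← hmz]; push_cast; ring
      rw [h9]; exact hb'
    have hZ3 : 3 ≤ |Zm| := by
      have h3 : ((|Zm|:ℤ):ℝ) > 2 := by linarith
      have h4 : (2:ℤ) < |Zm| := by exact_mod_cast h3
      omega
    have hZkey : |z| + 2 ≤ (|Zm| - 1)^2 := by
      have h1 : Real.sqrt (|((γ:ℚ):ℝ)| + 1) < ((|Zm|:ℤ):ℝ) - 1 := by linarith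
      have h2 : |((γ:ℚ):ℝ)| + 1 < (((|Zm|:ℤ):ℝ) - 1)^2 := by
        rw [← hs2]
        exact pow_lt_pow_left₀ h1 (Real.sqrt_nonneg _) (by norm_num)
      have h3 : ((|z| + 1 : ℤ):ℝ) < (((|Zm| - 1 : ℤ):ℤ):ℝ)^2 := by
        push_cast
        have h5 : |((z:ℤ):ℝ)| = |((γ:ℚ):ℝ)| := by
          congr 1
          exact_mod_cast hz
        rw [h5]
        push_cast at h2
        linarith
      have h4 : |z| + 1 < (|Zm| - 1)^2 := by exact_mod_cast h3
      omega
    have hgrow : ∀ i : ℕ, |Zm| + |z| + 1 ≤ |itf Zm (i+1)| := by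
      intro i
      induction i with
      | zero =>
        rw [itf_succ, itf_zero]
        rcases abs_cases Zm with ⟨h2, h3⟩ | ⟨h2, h3⟩ <;>
          rcases abs_cases (Zm^2 + Zm) with ⟨h4, h5⟩ | ⟨h4, h5⟩ <;> nlinarith [abs_nonneg z]
      | succ i ih =>
        rw [itf_succ (i := i+1)]
        rcases abs_cases (itf Zm (i+1)) with ⟨h4, h5⟩ | ⟨h4, h5⟩ <;>
          rcases abs_cases ((itf Zm (i+1))^2 + Zm) with ⟨h6, h7⟩ | ⟨h6, h7⟩ <;>
          rcases abs_cases Zm with ⟨h8, h9⟩ | ⟨h8, h9⟩ <;> nlinarith [abs_nonneg z]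
    set Zc : ℤ := Zm + z with hZc
    have hZccast : ((Zc:ℤ):ℚ) = γ + m := by rw [hZc]; push_cast; rw [hmz, hz]; ring
    have hZc0 : Zc ≠ 0 := fun h0 => hc0 (by rw [← hZccast, h0]; norm_num)
    have hsq' : t^2 = (((itf Zm (i0+1))^2 + Zc : ℤ) : ℚ) := by
      push_cast
      rw [itf_cast, hmz, hZccast, hsq]
    obtain ⟨T, hT⟩ := rat_int_of_sq t _ hsq'
    have hTeq : T^2 = (itf Zm (i0+1))^2 + Zc := by
      have h5 : ((T^2:ℤ):ℚ) = (((itf Zm (i0+1))^2 + Zc : ℤ):ℚ) := by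
        rw [← hsq']
        push_cast
        rw [hT]
      exact_mod_cast h5
    have h6 := int_abs_le_of_sq T (itf Zm (i0+1)) Zc hZc0 hTeq
    have habs2 : |Zc| ≤ |Zm| + |z| := by rw [hZc]; exact abs_add_le Zm z
    have h7 := hgrow i0
    omega
  · -- dyadic case
    have hodd_a : Odd a := by
      rcases Int.even_or_odd a with he | ho
      · exfalso
        obtain ⟨w, hw⟩ := he
        exact hint ⟨w, by
          have : ((w:ℤ):ℚ) * 2 = 2 * γ := by rw [← ha, hw]; push_cast; ring
          linarith⟩
      · exact ho
    have hbleft : |((m:ℚ):ℝ)| > 6 + 3 * Real.sqrt (|((γ:ℚ):ℝ)| + 1) := by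
      rcases hbound with h | h
      · exact h
      · exact absurd h.1 hint
    obtain ⟨l, hl⟩ := hodd_a
    set M : ℤ := 4*c0 - a*a - 2*a with hMdef
    set C' : ℤ := M + 2*a with hC'def
    have hM : (M:ℚ) = 4*m := by
      rw [hMdef]; push_cast; rw [hma]
      linear_combination (-(a:ℚ) - 2*γ - 2) * ha
    have hC : (C':ℚ) = 4*(γ+m) := by
      rw [hC'def]; push_cast; rw [hM, ha]; ring
    have hModd : Odd M := ⟨2*c0 - 2*l*l - 4*l - 2, by rw [hMdef, hl]; ring⟩
    have hCodd : Odd C' := hModd.add_even ⟨a, by ring⟩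
    -- cast identity for Vseq
    have hVcast : ∀ i : ℕ, ((Vseq M i : ℤ):ℚ) = itf m i * 2^(2^(i+1)) := by
      intro i
      induction i with
      | zero =>
        show ((M:ℤ):ℚ) = itf m 0 * 2^(2^1)
        rw [hM, itf_zero]; norm_num; ring
      | succ i ih =>
        show (((Vseq M i)^2 + M * 2^(2^(i+2) - 2) : ℤ):ℚ) = itf m (i+1) * 2^(2^(i+2))
        have h4 : (2:ℚ)^(2^(i+2)-2) * 4 = 2^(2^(i+2)) := by
          rw [show (4:ℚ) = 2^2 by norm_num, ← pow_add, exp_split]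
        have h5 : ((2:ℚ)^(2^(i+1)))^2 = 2^(2^(i+2)) := (pow_sq i).symm
        push_cast
        rw [ih, hM, itf_succ]
        linear_combination (itf m i)^2 * h5 + m * h4
    have hVodd : ∀ i : ℕ, Odd (Vseq M i) := by
      intro i
      induction i with
      | zero => exact hModd
      | succ i ih =>
        show Odd ((Vseq M i)^2 + M * 2^(2^(i+2) - 2))
        have he : Even (M * 2^(2^(i+2) - 2)) := by
          have : (2:ℤ) ∣ 2^(2^(i+2) - 2) := dvd_pow_self 2 (by
            have := four_le_pow i; omega)
          obtain ⟨w, hw⟩ := this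
          exact ⟨M * w, by rw [hw]; ring⟩
        exact (ih.pow).add_even he
    -- rational growth facts
    have hm9R : |((m:ℚ):ℝ)| > 9 := by linarith
    have hm9 : |m| > 9 := by exact_mod_cast (by push_cast; exact hm9R : ((|m|:ℚ):ℝ) > ((9:ℚ):ℝ))
    have hkeyR : |((m:ℚ):ℝ)|^2 > 9*|((m:ℚ):ℝ)| + 8*|((γ:ℚ):ℝ)| := by
      set s := Real.sqrt (|((γ:ℚ):ℝ)| + 1)
      nlinarith [hs1, hs2, hbleft, sq_nonneg (|((m:ℚ):ℝ)| - 6 - 3*s),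
        mul_nonneg (by linarith : (0:ℝ) ≤ s - 1) (by linarith : (0:ℝ) ≤ s + 10),
        abs_nonneg ((γ:ℚ):ℝ), abs_nonneg ((m:ℚ):ℝ)]
    have hkey : m^2 > 9*|m| + 8*|γ| := by
      have : ((m^2:ℚ):ℝ) > ((9*|m| + 8*|γ| :ℚ):ℝ) := by push_cast; nlinarith [hkeyR, sq_abs ((m:ℚ):ℝ)]
      exact_mod_cast this
    -- growth of the orbit
    have hgrow : ∀ i : ℕ, (|m|+|γ|) * 2^(2^(i+2)) < 2 * |itf m (i+1)| := by
      intro i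
      induction i with
      | zero =>
        rw [itf_succ, itf_zero]
        have habs : m^2 - |m| ≤ |m^2 + m| := by
          have h1 : |m^2| ≤ |m^2 + m| + |m| := by
            calc |m^2| = |(m^2 + m) + (-m)| := by ring_nf
              _ ≤ |m^2 + m| + |(-m)| := abs_add_le _ _
              _ = |m^2 + m| + |m| := by rw [abs_neg]
          linarith [h1, abs_of_nonneg (sq_nonneg m)]
        norm_num
        nlinarith [hkey, habs, abs_nonneg γ]
      | succ i ih =>
        set P : ℚ := 2^(2^(i+2)) with hP
        have hPpos : (0:ℚ) < P := by positivity
        have hP16 : (16:ℚ) ≤ P := by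
          rw [hP]
          calc (16:ℚ) = 2^4 := by norm_num
            _ ≤ 2^(2^(i+2)) := by
              apply pow_le_pow_right₀ (by norm_num)
              calc (4:ℕ) = 2^2 := by norm_num
                _ ≤ 2^(i+2) := Nat.pow_le_pow_right (by norm_num) (by omega)
        have hPP' : ((2:ℚ)^(2^(i+3))) = P^2 := by rw [hP]; exact pow_sq (i+1)
        have hW2 : (9:ℚ) < |m| + |γ| := by linarith [abs_nonneg γ]
        have hsqIH : ((|m|+|γ|)*P)^2 < (2*|itf m (i+1)|)^2 :=
          mul_self_lt_mul_self (by positivity) ih |>.trans_eq (by ring) |>.trans_eq' (by ring)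
        have habs2 : (itf m (i+1))^2 - |m| ≤ |itf m (i+2)| := by
          rw [itf_succ (i := i+1)]
          have h1 : |(itf m (i+1))^2| ≤ |(itf m (i+1))^2 + m| + |m| := by
            calc |(itf m (i+1))^2| = |((itf m (i+1))^2 + m) + (-m)| := by ring_nf
              _ ≤ |(itf m (i+1))^2 + m| + |(-m)| := abs_add_le _ _
              _ = |(itf m (i+1))^2 + m| + |m| := by rw [abs_neg]
          linarith [h1, abs_of_nonneg (sq_nonneg (itf m (i+1)))]
        rw [hPP']
        have hPsq : (256:ℚ) ≤ P^2 := by nlinarith [hP16, hPpos]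
        have hmW : |m| ≤ |m| + |γ| := by linarith [abs_nonneg γ]
        nlinarith [hsqIH, habs2, hPsq, hW2, hmW, abs_nonneg m, abs_nonneg (itf m (i+1)),
          sq_abs (itf m (i+1)), hPpos,
          mul_nonneg (by linarith : (0:ℚ) ≤ |m| + |γ|) (by linarith : (0:ℚ) ≤ P^2 - 256),
          mul_nonneg (by linarith : (0:ℚ) ≤ (|m| + |γ|) - 9) (by positivity : (0:ℚ) ≤ P^2)]
    -- final contradiction
    set j : ℕ := i0 + 1 with hjdef
    set P : ℚ := 2^(2^(j+1)) with hPdef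
    have hPpos : (0:ℚ) < P := by positivity
    set E : ℤ := 2^(2^(i0+3) - 2) with hEdef
    have hEpos : (0:ℤ) < E := by positivity
    have hEt : (E:ℚ)*4 = P^2 := by
      rw [hEdef, hPdef, hjdef]
      push_cast
      rw [show (4:ℚ) = 2^2 by norm_num, ← pow_add, ← pow_mul]
      congr 1
      have h1 : (2:ℕ)^(i0+3) = 2^(i0+2)*2 := pow_succ 2 (i0+2)
      have h2 : 4 ≤ (2:ℕ)^(i0+3) := four_le_pow (i0+1)
      have h3 : (2:ℕ)^(i0+1+1) = 2^(i0+2) := rfl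
      omega
    have hsq2 : (t*P)^2 = (((Vseq M j)^2 + C' * E : ℤ):ℚ) := by
      push_cast
      rw [hVcast j, hC]
      have : (t*P)^2 = t^2 * P^2 := by ring
      rw [this, hsq]
      have hj1 : j + 1 = i0 + 2 := by rw [hjdef]
      rw [hj1, ← hPdef]
      nlinarith [hEt, sq_nonneg (itf m j), hPpos]
    obtain ⟨T, hT⟩ := rat_int_of_sq (t*P) _ hsq2
    have hTeq : T^2 = (Vseq M j)^2 + C' * E := by
      have h5 : ((T^2:ℤ):ℚ) = (((Vseq M j)^2 + C' * E : ℤ):ℚ) := by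
        rw [← hsq2]; push_cast; rw [hT]
      exact_mod_cast h5
    have hTodd : Odd T := by
      rcases Int.even_or_odd T with he | ho
      · exfalso
        have h1 : Even (T^2) := by
          obtain ⟨w, hw⟩ := he
          exact ⟨2*w^2, by rw [hw]; ring⟩
        have h2 : Odd ((Vseq M j)^2 + C' * E) := by
          apply Odd.add_even ((hVodd j).pow)
          have : (2:ℤ) ∣ E := by
            rw [hEdef]
            exact dvd_pow_self 2 (by have h2 : 4 ≤ (2:ℕ)^(i0+3) := four_le_pow (i0+1); omega)
          obtain ⟨w, hw⟩ := this
          exact ⟨C' * w, by rw [hw]; ring⟩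
        rw [hTeq] at h1
        rcases h1 with ⟨w1, hw1⟩
        rcases h2 with ⟨w2, hw2⟩
        omega
      · exact ho
    have hCE0 : C' * E ≠ 0 := by
      have hC0 : C' ≠ 0 := by
        intro h0
        rcases hCodd with ⟨w, hw⟩
        rw [h0] at hw
        omega
      exact mul_ne_zero hC0 (ne_of_gt hEpos)
    have hmain := int_dyadic T (Vseq M j) (C' * E) hTodd (hVodd j) hCE0 hTeq
    -- cast to ℚ and contradict growth
    have hmainQ : 2 * |((Vseq M j : ℤ):ℚ)| ≤ |((C':ℤ):ℚ)| * ((E:ℤ):ℚ) := by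
      have : ((2 * |Vseq M j| : ℤ):ℚ) ≤ ((|C' * E| : ℤ):ℚ) := by exact_mod_cast hmain
      push_cast at this
      rw [abs_mul] at this
      have hEabs : |((E:ℤ):ℚ)| = ((E:ℤ):ℚ) := abs_of_pos (by exact_mod_cast hEpos)
      rw [hEabs] at this
      exact this
    have hCabs : |((C':ℤ):ℚ)| = 4*|γ+m| := by
      rw [hC, abs_mul, abs_of_pos (by norm_num : (0:ℚ) < 4)]
    have hVabs : |((Vseq M j : ℤ):ℚ)| = |itf m j| * P := by
      rw [hVcast j, ← hPdef, abs_mul, abs_of_pos hPpos]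
    have hg := hgrow i0
    have hgP : (|m|+|γ|) * P < 2 * |itf m j| := by
      rw [hPdef, hjdef]
      exact hg
    have habsc : |γ + m| ≤ |γ| + |m| := abs_add_le γ m
    rw [hVabs, hCabs] at hmainQ
    have hE4 : ((E:ℤ):ℚ) = P^2/4 := by rw [← hEt]; ring
    rw [hE4] at hmainQ
    nlinarith [hmainQ, hgP, habsc, hPpos, abs_nonneg (itf m j)]

theorem stable_of_large_m
    (f : Polynomial ℤ) (hf : f.Monic) (hdeg : f.natDegree = 2)
    (hirr : Irreducible (f.map (Int.castRingHom ℚ)))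
    (γ m : ℚ) (hγ : γ = -(f.coeff 1 : ℚ) / 2)
    (hm : m = Polynomial.aeval γ f - γ)
    (hbound : ((|m| : ℚ) : ℝ) > 6 + 3 * Real.sqrt (|γ| + 1) ∨
      ((∃ z : ℤ, (z : ℚ) = γ) ∧ ((|m| : ℚ) : ℝ) > 1 + Real.sqrt (|γ| + 1)))
    (hf2 : ∀ s : ℚ, s ^ 2 = (fun x : ℚ => Polynomial.aeval x f)^[2] γ →
      (¬∃ r : ℚ, r ≠ 0 ∧ r ^ 2 = (-m + s) / 2) ∧ (¬∃ r : ℚ, r ≠ 0 ∧ r ^ 2 = (-m - s) / 2)) :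
    ∀ n : ℕ, 1 ≤ n → Irreducible ((polyIter f n).map (Int.castRingHom ℚ)) := by
  set q : Polynomial ℚ := f.map (Int.castRingHom ℚ) with hqdef
  have hqm : q.Monic := hf.map _
  have hq2 : q.natDegree = 2 := by rw [hqdef, hf.natDegree_map]; exact hdeg
  -- evaluation bridge
  have haev : ∀ x : ℚ, Polynomial.aeval x f = eval x q := fun x => by
    rw [aeval_def, eval₂_eq_eval_map]; rfl
  have heval : ∀ x : ℚ, eval x q = x^2 + (f.coeff 1 : ℚ) * x + (f.coeff 0 : ℚ) := by
    intro x
    have h1 := eval_quad q hqm hq2 x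
    rwa [hqdef, coeff_map, coeff_map, eq_intCast, eq_intCast] at h1
  have hb : (f.coeff 1 : ℚ) = -2*γ := by rw [hγ]; ring
  set c' : ℚ := γ + m with hc'def
  have hc'val : c' = eval γ q := by rw [hc'def, hm, haev γ]; ring
  have hcc : c' = (f.coeff 0 : ℚ) - γ^2 := by
    rw [hc'val, heval γ, hb]; ring
  have hmc0 : m = (f.coeff 0 : ℚ) - γ^2 - γ := by
    rw [show m = c' - γ by rw [hc'def]; ring, hcc]
  have hqform : q = (X - C γ)^2 + C c' := by
    apply Polynomial.funext
    intro x
    rw [heval x]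
    simp only [eval_add, eval_pow, eval_sub, eval_X, eval_C]
    rw [hb, hcc]; ring
  have hFq : ∀ x : ℚ, eval x q = (x - γ)^2 + (γ + m) := by
    intro x
    rw [heval x, hb, show γ + m = c' from rfl, hcc]; ring
  have hfun : (fun x : ℚ => (Polynomial.aeval x f : ℚ)) = (fun y : ℚ => eval y q) :=
    funext haev
  have hfun2 : (fun y : ℚ => eval y q) = (fun x : ℚ => (x - γ)^2 + (γ + m)) :=
    funext hFq
  -- c' ≠ 0
  have hc0 : γ + m ≠ 0 := by
    intro h0
    have hc'0 : c' = 0 := hc'def.trans h0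
    have h9 : q = (X - C γ) * (X - C γ) := by rw [hqform, hc'0, C_0, add_zero, sq]
    rcases hirr.isUnit_or_isUnit h9 with h | h
    · exact not_isUnit_X_sub_C γ h
    · exact not_isUnit_X_sub_C γ h
  -- the integer a = 2γ
  have ha : ((-(f.coeff 1) : ℤ) : ℚ) = 2*γ := by push_cast; rw [hb]; ring
  -- nonsquare values of the orbit
  have hnonsq : ∀ k : ℕ, 3 ≤ k → ∀ t : ℚ, t^2 ≠ (fun y : ℚ => eval y q)^[k] γ := by
    intro k hk t
    rw [hfun2]
    exact orbit_not_square γ m (-(f.coeff 1)) (f.coeff 0) ha hmc0 hc0 hbound k hk t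
  -- main induction
  intro n hn
  induction n, hn using Nat.le_induction with
  | base =>
    rw [polyIter_map, ← hqdef]
    have h9 : polyIter q 1 = q := by
      show q.comp (polyIter q 0) = q
      show q.comp X = q
      exact comp_X
    rw [h9]
    exact hirr
  | succ n hn ih =>
    rw [polyIter_map, ← hqdef] at ih ⊢
    by_contra hH
    set Pn : Polynomial ℚ := polyIter q n with hPn
    have hPnm := (polyIter_monic q hqm hq2 n).1
    have hPnd := (polyIter_monic q hqm hq2 n).2
    have hcomp : polyIter q (n+1) = Pn.comp ((X - C γ)^2 + C c') := by
      rw [polyIter_succ_right, ← hPn, ← hqform]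
    rw [hcomp] at hH
    have heven : Even Pn.natDegree := by
      rw [hPnd]
      exact (Nat.even_pow).mpr ⟨even_two, by omega⟩
    have hne0 : Pn.natDegree ≠ 0 := by rw [hPnd]; positivity
    rcases stoll_structure γ c' Pn hPnm ih heven hne0 hH with h0 | ⟨A, hAm, hAirr, hAdeg, hfact, hAne⟩
    · -- orbit value vanishes
      have hv : (fun y : ℚ => eval y q)^[n+1] γ = 0 := by
        rw [← polyIter_eval, hcomp]
        exact h0
      rcases Nat.lt_or_ge n 2 with h1 | h1
      · -- n = 1 : q has rational root (eval c' q = 0)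
        have hn1 : n = 1 := by omega
        subst hn1
        have : eval c' q = 0 := by
          have h2 : (fun y : ℚ => eval y q)^[2] γ = eval c' q := by
            rw [Function.iterate_succ_apply', Function.iterate_one, ← hc'val]
          rw [← h2]
          exact hv
        have hdvd : (X - C c') ∣ q := dvd_iff_isRoot.mpr this
        obtain ⟨w, hw⟩ := hdvd
        rcases hirr.isUnit_or_isUnit hw with h | h
        · exact not_isUnit_X_sub_C c' h
        · have hw0 : w.natDegree = 0 := natDegree_eq_zero_of_isUnit h
          have : q.natDegree = 1 := by
            rw [hw, natDegree_mul (X_sub_C_ne_zero c') (fun h' => by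
              rw [h'] at hw; rw [mul_zero] at hw; exact hqm.ne_zero hw),
              natDegree_X_sub_C, hw0]
          omega
      · exact hnonsq (n+1) (by omega) 0 (by rw [hv]; norm_num)
    · rcases Nat.lt_or_ge n 2 with h1 | h1
      · -- n = 1 : the refined quadratic analysis
        have hn1 : n = 1 := by omega
        subst hn1
        have hA2 : A.natDegree = 2 := by rw [hAdeg, hPnd]; rfl
        set a₁ : ℚ := A.coeff 1 with ha₁
        set a₀ : ℚ := A.coeff 0 with ha₀
        have hevalA : ∀ x : ℚ, eval x A = x^2 + a₁*x + a₀ := eval_quad A hAm hA2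
        -- evaluate the factorization at γ and γ+1
        have hevσ : ∀ x : ℚ, eval x (A.comp (C (2*γ) - X)) = eval (2*γ - x) A := by
          intro x
          rw [eval_comp, eval_sub, eval_C, eval_X]
        have hH1 : ∀ x : ℚ, eval x (Pn.comp ((X - C γ)^2 + C c'))
            = eval x A * eval (2*γ - x) A := by
          intro x
          rw [hfact, eval_mul, hevσ]
        have horb : ∀ x : ℚ, eval x (Pn.comp ((X - C γ)^2 + C c'))
            = ((x - γ)^2 + m)^2 + (γ + m) := by
          intro x
          rw [← hcomp, polyIter_eval]
          show eval (eval x q) q = _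
          rw [hFq x, hFq ((x-γ)^2 + (γ+m))]
          ring
        have e1 := (horb γ).symm.trans (hH1 γ)
        have e2 := (horb (γ+1)).symm.trans (hH1 (γ+1))
        rw [hevalA] at e1 e2
        rw [hevalA] at e1 e2
        set s : ℚ := γ^2 + a₁*γ + a₀ with hs
        set w : ℚ := 2*γ + a₁ with hwdef
        have eq1 : m^2 + (γ + m) = s^2 := by
          rw [hs]; rw [show 2*γ - γ = γ by ring] at e1; linear_combination e1
        have eq2 : (1+m)^2 + (γ + m) = (s+1)^2 - w^2 := by
          rw [hs, hwdef]; linear_combination e2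
        have hw0 : w ≠ 0 := by
          intro h0
          apply hAne
          apply Polynomial.funext
          intro x
          rw [hevσ, hevalA, hevalA]
          have ha1γ : a₁ = -2*γ := by rw [hwdef] at h0; linarith
          rw [ha1γ]; ring
        have hsval : s^2 = (fun x : ℚ => (Polynomial.aeval x f : ℚ))^[2] γ := by
          rw [hfun]
          have h2 : (fun y : ℚ => eval y q)^[2] γ = m^2 + (γ + m) := by
            rw [Function.iterate_succ_apply', Function.iterate_one, hFq γ, hFq]
            ring
          rw [h2, eq1]
        have hkey2 : w^2 = 2*s - 2*m := by linear_combination eq2 - eq1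
        have hfin : (w/2)^2 = (-m + s)/2 := by
          rw [div_pow, hkey2]; ring
        exact (hf2 s hsval).1 ⟨w/2, div_ne_zero hw0 two_ne_zero, hfin⟩
      · -- n ≥ 2 : orbit value is a square
        have hval : (fun y : ℚ => eval y q)^[n+1] γ = (eval γ A)^2 := by
          rw [← polyIter_eval, hcomp, hfact, eval_mul, eval_comp]
          simp only [eval_sub, eval_C, eval_X]
          rw [show 2*γ - γ = γ by ring]
          ring
        exact hnonsq (n+1) (by omega) (eval γ A) hval.symm
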